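/- Reliability of the defeaturing estimator (negative feature): under the setting of the defeaturing error identity, if γ is isotropic, then |u − u₀|_Ω|_{H¹(Ω)} ≲ E_n(u₀), where E_n(u₀)² = |γ|^{1/(n−1)} ‖d_γ − d̄_γ‖²_{L²(γ)} + c_γ² |γ|^{n/(n−1)} |d̄_γ|², d̄_γ denotes the mean of d_γ over γ, and c_γ = max(|log|γ||, η)^{1/2} for n = 2, c_γ = 1 for n = 3. -/

import Mathlib

open MeasureTheory Set

noncomputable section

/-- Cauchy–Schwarz for integrals of real functions in `L²`. -/
lemma abs_integral_mul_le_sqrt_mul_sqrt {X : Type*} [MeasurableSpace X] (μ : Measure X)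
    {f g : X → ℝ} (hf : MemLp f 2 μ) (hg : MemLp g 2 μ) :
    |∫ x, f x * g x ∂μ| ≤ Real.sqrt (∫ x, f x ^ 2 ∂μ) * Real.sqrt (∫ x, g x ^ 2 ∂μ) := by
  have h2 : (2 : ENNReal) = ENNReal.ofReal (2 : ℝ) := by
    simp [ENNReal.ofReal_ofNat]
  have hf' : MemLp f (ENNReal.ofReal (2 : ℝ)) μ := h2 ▸ hf
  have hg' : MemLp g (ENNReal.ofReal (2 : ℝ)) μ := h2 ▸ hg
  have hpq : Real.HolderConjugate 2 2 := Real.HolderConjugate.two_two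
  have key := integral_mul_norm_le_Lp_mul_Lq hpq hf' hg'
  have habs : ∀ x : ℝ, ‖x‖ ^ (2 : ℝ) = x ^ 2 := fun x => by
    rw [show (2 : ℝ) = ((2 : ℕ) : ℝ) by norm_num, Real.rpow_natCast, Real.norm_eq_abs, sq_abs]
  have h1 : (∫ x, ‖f x‖ ^ (2 : ℝ) ∂μ) = ∫ x, f x ^ 2 ∂μ := by
    refine integral_congr_ae (Filter.Eventually.of_forall fun x => habs _)
  have h2' : (∫ x, ‖g x‖ ^ (2 : ℝ) ∂μ) = ∫ x, g x ^ 2 ∂μ := by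
    refine integral_congr_ae (Filter.Eventually.of_forall fun x => habs _)
  calc |∫ x, f x * g x ∂μ| ≤ ∫ x, ‖f x * g x‖ ∂μ := by
        simpa [Real.norm_eq_abs] using norm_integral_le_integral_norm (fun x => f x * g x) (μ := μ)
    _ = ∫ x, ‖f x‖ * ‖g x‖ ∂μ := by simp [norm_mul]
    _ ≤ (∫ x, ‖f x‖ ^ (2 : ℝ) ∂μ) ^ ((1 : ℝ) / 2) * (∫ x, ‖g x‖ ^ (2 : ℝ) ∂μ) ^ ((1 : ℝ) / 2) :=
        key
    _ = Real.sqrt (∫ x, f x ^ 2 ∂μ) * Real.sqrt (∫ x, g x ^ 2 ∂μ) := by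
        rw [h1, h2', Real.sqrt_eq_rpow, Real.sqrt_eq_rpow]

set_option maxHeartbeats 1000000 in
/-- Reliability of the defeaturing estimator (negative feature): under the error representation
tested with `e` itself, the fractional Poincaré inequality on `γ`, the boundary `L²` trace
estimate with constant `c_γ`, and the trace inequality `‖e‖_{H^{1/2}(∂Ω)} ≲ |e|_{H¹(Ω)}`,
the defeaturing error satisfies `|e|_{H¹(Ω)} ≲ E_n(u₀)`, where
`E_n(u₀)² = |γ|^{1/(n−1)} ‖d_γ − d̄_γ‖²_{L²(γ)} + c_γ² |γ|^{n/(n−1)} |d̄_γ|²` and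
`c_γ = max(|log|γ||, η)^{1/2}` if `n = 2`, `c_γ = 1` if `n = 3`. -/
theorem defeaturing_reliability
    (n : ℕ) (hn : 2 ≤ n)
    {X : Type*} [MeasurableSpace X] (ν : Measure X)
    (γ : Set X) (hγfin : ν γ ≠ ⊤) (hγpos : 0 < (ν γ).toReal)
    (η : ℝ) (hη : 0 < η) (hηeq : η = -Real.log η)
    (d e : X → ℝ)
    (hd : MemLp d 2 (ν.restrict γ)) (he : MemLp e 2 (ν.restrict γ))
    (eH1 eHalfBd : ℝ) (heH1 : 0 ≤ eH1) (heHalfBd : 0 ≤ eHalfBd)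
    (C2 C3 C4 : ℝ) (hC2 : 0 < C2) (hC3 : 0 < C3) (hC4 : 0 < C4)
    (cγ : ℝ)
    (hcγ : cγ = if n = 2 then Real.sqrt (max |Real.log ((ν γ).toReal)| η) else 1)
    -- (i) error representation, tested with v = e
    (hrep : eH1 ^ 2 = ∫ x in γ, d x * e x ∂ν)
    -- (ii) fractional Poincaré inequality on γ combined with the trace to ∂Ω
    (hPoin : Real.sqrt (∫ x in γ, (e x - (ν γ).toReal⁻¹ * ∫ y in γ, e y ∂ν) ^ 2 ∂ν)
      ≤ C2 * (ν γ).toReal ^ ((1 : ℝ) / (2 * ((n : ℝ) - 1))) * eHalfBd)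
    -- (iii) boundary L² estimate ‖e‖_{L²(γ)} ≲ c_γ |γ|^{1/(2(n−1))} ‖e‖_{H^{1/2}(∂Ω)}
    (hTr : Real.sqrt (∫ x in γ, (e x) ^ 2 ∂ν)
      ≤ C3 * cγ * (ν γ).toReal ^ ((1 : ℝ) / (2 * ((n : ℝ) - 1))) * eHalfBd)
    -- (iv) trace inequality ‖e‖_{H^{1/2}(∂Ω)} ≲ |e|_{H¹(Ω)}
    (hH1 : eHalfBd ≤ C4 * eH1) :
    eH1 ≤ Real.sqrt 2 * max (C2 * C4) (C3 * C4) *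
      Real.sqrt ((ν γ).toReal ^ ((1 : ℝ) / ((n : ℝ) - 1)) *
          (∫ x in γ, (d x - (ν γ).toReal⁻¹ * ∫ y in γ, d y ∂ν) ^ 2 ∂ν)
        + cγ ^ 2 * (ν γ).toReal ^ ((n : ℝ) / ((n : ℝ) - 1)) *
          ((ν γ).toReal⁻¹ * ∫ y in γ, d y ∂ν) ^ 2) := by
  -- notation
  set μ := ν.restrict γ with hμ
  haveI : IsFiniteMeasure μ := by
    constructor
    rw [hμ, Measure.restrict_apply_univ]
    exact lt_top_iff_ne_top.mpr hγfin
  set m : ℝ := (ν γ).toReal with hm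
  have hm0 : (0 : ℝ) ≤ m := hγpos.le
  have hm_ne : m ≠ 0 := ne_of_gt hγpos
  have hmμ : (μ univ).toReal = m := by rw [hμ, Measure.restrict_apply_univ]
  set db : ℝ := m⁻¹ * ∫ y in γ, d y ∂ν with hdb
  set eb : ℝ := m⁻¹ * ∫ y in γ, e y ∂ν with heb
  set α : ℝ := (1 : ℝ) / (2 * ((n : ℝ) - 1)) with hα
  have hα0 : (0 : ℝ) ≤ m ^ α := Real.rpow_nonneg hm0 α
  have hsm0 : (0 : ℝ) ≤ Real.sqrt m := Real.sqrt_nonneg m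
  have hn2 : (2 : ℝ) ≤ (n : ℝ) := by exact_mod_cast hn
  have hne : ((n : ℝ) - 1) ≠ 0 := by intro h; linarith
  have hcγ_nonneg : 0 ≤ cγ := by
    rw [hcγ]; split <;> [exact Real.sqrt_nonneg _; norm_num]
  -- integrability facts
  have hd1 : Integrable d μ := hd.integrable one_le_two
  have he1 : Integrable e μ := he.integrable one_le_two
  have hde : Integrable (fun x => d x * e x) μ := by
    have : Integrable (fun x => e x * d x) μ := he.integrable_mul hd
    simpa [smul_eq_mul, mul_comm] using this
  have hdc : MemLp (fun x => d x - db) 2 μ := hd.sub (memLp_const db)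
  have hec : MemLp (fun x => e x - eb) 2 μ := he.sub (memLp_const eb)
  have hone : MemLp (fun _ : X => (1 : ℝ)) 2 μ := memLp_const 1
  -- integral means
  have hintd : (∫ x, d x ∂μ) = m * db := by
    rw [hdb, hμ]; exact (mul_inv_cancel_left₀ hm_ne _).symm
  have hinte : (∫ x, e x ∂μ) = m * eb := by
    rw [heb, hμ]; exact (mul_inv_cancel_left₀ hm_ne _).symm
  -- key identity
  have i1 : Integrable (fun x => db * e x) μ := he1.const_mul db
  have i2 : Integrable (fun x => eb * d x) μ := hd1.const_mul eb
  have e1 : ∫ x, (d x * e x - db * e x) ∂μ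
      = (∫ x, d x * e x ∂μ) - ∫ x, db * e x ∂μ := integral_sub hde i1
  have e2 : ∫ x, ((d x * e x - db * e x) - eb * d x) ∂μ
      = (∫ x, (d x * e x - db * e x) ∂μ) - ∫ x, eb * d x ∂μ := integral_sub (hde.sub i1) i2
  have e3 : ∫ x, (((d x * e x - db * e x) - eb * d x) + db * eb) ∂μ
      = (∫ x, ((d x * e x - db * e x) - eb * d x) ∂μ) + ∫ _x, (db * eb : ℝ) ∂μ :=
    integral_add ((hde.sub i1).sub i2) (integrable_const _)
  have hident : (∫ x, d x * e x ∂μ)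
      = (∫ x, (d x - db) * (e x - eb) ∂μ) + db * ∫ x, e x ∂μ := by
    have hcongr : (∫ x, (d x - db) * (e x - eb) ∂μ)
        = ∫ x, (((d x * e x - db * e x) - eb * d x) + db * eb) ∂μ :=
      integral_congr_ae (Filter.Eventually.of_forall fun x => by ring)
    rw [hcongr, e3, e2, e1, integral_const_mul, integral_const_mul, integral_const, measureReal_def, hmμ,
      smul_eq_mul, hintd, hinte]
    ring
  -- Cauchy–Schwarz bounds
  set A : ℝ := Real.sqrt (∫ x, (d x - db) ^ 2 ∂μ) with hA0
  have hA_nonneg : 0 ≤ A := Real.sqrt_nonneg _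
  have hA := abs_integral_mul_le_sqrt_mul_sqrt μ hdc hec
  have hB := abs_integral_mul_le_sqrt_mul_sqrt μ hone he
  have hone_sq : (∫ x, (fun _ : X => (1 : ℝ)) x ^ 2 ∂μ) = m := by simp [measureReal_def, hmμ]
  have t2 : |∫ x, e x ∂μ| ≤ Real.sqrt m * Real.sqrt (∫ x, e x ^ 2 ∂μ) := by
    simpa [one_mul, hone_sq, hmμ, measureReal_def] using hB
  -- main bound on eH1 ^ 2
  have key1 : eH1 ^ 2 ≤ A * (C2 * m ^ α * eHalfBd)
      + |db| * (Real.sqrt m * (C3 * cγ * m ^ α * eHalfBd)) := by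
    calc eH1 ^ 2 = (∫ x, (d x - db) * (e x - eb) ∂μ) + db * ∫ x, e x ∂μ := by
          rw [hrep]; exact hident
      _ ≤ |∫ x, (d x - db) * (e x - eb) ∂μ| + |db * ∫ x, e x ∂μ| :=
          add_le_add (le_abs_self _) (le_abs_self _)
      _ = |∫ x, (d x - db) * (e x - eb) ∂μ| + |db| * |∫ x, e x ∂μ| := by rw [abs_mul]
      _ ≤ A * Real.sqrt (∫ x, (e x - eb) ^ 2 ∂μ)
          + |db| * (Real.sqrt m * Real.sqrt (∫ x, e x ^ 2 ∂μ)) :=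
          add_le_add hA (mul_le_mul_of_nonneg_left t2 (abs_nonneg db))
      _ ≤ A * (C2 * m ^ α * eHalfBd)
          + |db| * (Real.sqrt m * (C3 * cγ * m ^ α * eHalfBd)) :=
          add_le_add (mul_le_mul_of_nonneg_left hPoin hA_nonneg)
            (mul_le_mul_of_nonneg_left (mul_le_mul_of_nonneg_left hTr hsm0) (abs_nonneg db))
  set P : ℝ := C2 * C4 * (A * m ^ α) with hP
  set Q : ℝ := C3 * C4 * (cγ * m ^ α * Real.sqrt m * |db|) with hQ
  clear_value P Q
  have hP_nonneg : 0 ≤ P := by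
    rw [hP]
    exact mul_nonneg (mul_nonneg hC2.le hC4.le) (mul_nonneg hA_nonneg hα0)
  have hQ_nonneg : 0 ≤ Q := by
    rw [hQ]
    exact mul_nonneg (mul_nonneg hC3.le hC4.le)
      (mul_nonneg (mul_nonneg (mul_nonneg hcγ_nonneg hα0) hsm0) (abs_nonneg db))
  have hstep : eH1 ≤ P + Q := by
    rcases eq_or_lt_of_le heH1 with h0 | h0
    · rw [← h0]; exact add_nonneg hP_nonneg hQ_nonneg
    · have w1 : A * (C2 * m ^ α * eHalfBd) ≤ A * (C2 * m ^ α * (C4 * eH1)) :=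
        mul_le_mul_of_nonneg_left
          (mul_le_mul_of_nonneg_left hH1 (mul_nonneg hC2.le hα0)) hA_nonneg
      have w2 : |db| * (Real.sqrt m * (C3 * cγ * m ^ α * eHalfBd))
          ≤ |db| * (Real.sqrt m * (C3 * cγ * m ^ α * (C4 * eH1))) :=
        mul_le_mul_of_nonneg_left
          (mul_le_mul_of_nonneg_left
            (mul_le_mul_of_nonneg_left hH1
              (mul_nonneg (mul_nonneg hC3.le hcγ_nonneg) hα0)) hsm0) (abs_nonneg db)
      have key2 : eH1 * eH1 ≤ (P + Q) * eH1 := by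
        have hr : A * (C2 * m ^ α * (C4 * eH1))
            + |db| * (Real.sqrt m * (C3 * cγ * m ^ α * (C4 * eH1))) = (P + Q) * eH1 := by
          rw [hP, hQ]; ring
        calc eH1 * eH1 = eH1 ^ 2 := (sq eH1).symm
          _ ≤ A * (C2 * m ^ α * (C4 * eH1))
              + |db| * (Real.sqrt m * (C3 * cγ * m ^ α * (C4 * eH1))) := by
              linarith [key1, w1, w2]
          _ = (P + Q) * eH1 := hr
      exact le_of_mul_le_mul_right key2 h0
  -- relate the squares to the target
  set M : ℝ := max (C2 * C4) (C3 * C4) with hM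
  have hM_pos : 0 < M := by rw [hM]; exact lt_max_of_lt_left (mul_pos hC2 hC4)
  set S : ℝ := m ^ ((1 : ℝ) / ((n : ℝ) - 1)) * (∫ x, (d x - db) ^ 2 ∂μ)
      + cγ ^ 2 * m ^ ((n : ℝ) / ((n : ℝ) - 1)) * db ^ 2 with hS
  clear_value M S
  have hint_nonneg : (0 : ℝ) ≤ ∫ x, (d x - db) ^ 2 ∂μ :=
    integral_nonneg fun x => sq_nonneg _
  have hAsq : A ^ 2 = ∫ x, (d x - db) ^ 2 ∂μ := by
    rw [hA0]; exact Real.sq_sqrt hint_nonneg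
  have hmα2 : (m ^ α) ^ 2 = m ^ ((1 : ℝ) / ((n : ℝ) - 1)) := by
    rw [← Real.rpow_natCast (m ^ α) 2, ← Real.rpow_mul hm0]
    congr 1
    rw [hα]
    push_cast
    field_simp
  have hsqm : Real.sqrt m ^ 2 = m := Real.sq_sqrt hm0
  have hmn : m ^ ((1 : ℝ) / ((n : ℝ) - 1)) * m = m ^ ((n : ℝ) / ((n : ℝ) - 1)) := by
    have hxy : (n : ℝ) / ((n : ℝ) - 1) = 1 / ((n : ℝ) - 1) + 1 := by
      field_simp; ring
    rw [hxy, Real.rpow_add hγpos, Real.rpow_one]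
  have hrpow1_nonneg : (0 : ℝ) ≤ m ^ ((1 : ℝ) / ((n : ℝ) - 1)) := Real.rpow_nonneg hm0 _
  have hrpown_nonneg : (0 : ℝ) ≤ m ^ ((n : ℝ) / ((n : ℝ) - 1)) := Real.rpow_nonneg hm0 _
  have hPsq : P ^ 2 ≤ M ^ 2 * (m ^ ((1 : ℝ) / ((n : ℝ) - 1)) * (∫ x, (d x - db) ^ 2 ∂μ)) := by
    have h1 : C2 * C4 ≤ M := by rw [hM]; exact le_max_left _ _
    have hPe : P ^ 2 = (C2 * C4) ^ 2 * ((m ^ α) ^ 2 * A ^ 2) := by rw [hP]; ring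
    rw [hPe, hmα2, hAsq]
    have h2 : (C2 * C4) ^ 2 ≤ M ^ 2 :=
      pow_le_pow_left₀ (mul_nonneg hC2.le hC4.le) h1 2
    exact mul_le_mul_of_nonneg_right h2 (mul_nonneg hrpow1_nonneg hint_nonneg)
      |>.trans_eq rfl
  have hQsq : Q ^ 2 ≤ M ^ 2 * (cγ ^ 2 * m ^ ((n : ℝ) / ((n : ℝ) - 1)) * db ^ 2) := by
    have h1 : C3 * C4 ≤ M := by rw [hM]; exact le_max_right _ _
    have hQe : Q ^ 2 = (C3 * C4) ^ 2
        * (cγ ^ 2 * ((m ^ α) ^ 2 * Real.sqrt m ^ 2) * |db| ^ 2) := by rw [hQ]; ring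
    rw [hQe, hmα2, hsqm, hmn, sq_abs]
    have h2 : (C3 * C4) ^ 2 ≤ M ^ 2 :=
      pow_le_pow_left₀ (mul_nonneg hC3.le hC4.le) h1 2
    exact mul_le_mul_of_nonneg_right h2
      (mul_nonneg (mul_nonneg (sq_nonneg cγ) hrpown_nonneg) (sq_nonneg db))
  have hS_nonneg : 0 ≤ S := by
    rw [hS]
    exact add_nonneg (mul_nonneg hrpow1_nonneg hint_nonneg)
      (mul_nonneg (mul_nonneg (sq_nonneg cγ) hrpown_nonneg) (sq_nonneg db))
  have hPQ : P + Q ≤ Real.sqrt 2 * M * Real.sqrt S := by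
    have hsum : (P + Q) ^ 2 ≤ 2 * (M ^ 2 * S) := by
      have ht := two_mul_le_add_sq P Q
      have h1 : (P + Q) ^ 2 ≤ 2 * (P ^ 2 + Q ^ 2) := by
        have hexp : (P + Q) ^ 2 = P ^ 2 + 2 * P * Q + Q ^ 2 := by ring
        linarith
      have h2 : P ^ 2 + Q ^ 2 ≤ M ^ 2 * S := by rw [hS]; linarith [hPsq, hQsq]
      linarith
    have h0 : 0 ≤ P + Q := add_nonneg hP_nonneg hQ_nonneg
    calc P + Q = Real.sqrt ((P + Q) ^ 2) := (Real.sqrt_sq h0).symm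
      _ ≤ Real.sqrt (2 * (M ^ 2 * S)) := Real.sqrt_le_sqrt hsum
      _ = Real.sqrt 2 * M * Real.sqrt S := by
          rw [Real.sqrt_mul (by norm_num : (0 : ℝ) ≤ 2), Real.sqrt_mul (sq_nonneg M),
            Real.sqrt_sq hM_pos.le, mul_assoc]
  exact hstep.trans hPQ
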